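/- Let D ≥ 1, let μ be the Haar probability measure on the unitary group of D×D complex matrices, and let ψ ∈ ℂ^D be a unit vector. Then ∫ ∑_{i=1}^D |(Uψ)_i|⁴ dμ(U) = 2/(D + 1). -/

import Mathlib

open MeasureTheory Matrix

noncomputable instance matrixMeasurableSpace {m n : Type*} :
    MeasurableSpace (Matrix m n ℂ) :=
  inferInstanceAs (MeasurableSpace (m → n → ℂ))

namespace HaarPurity

variable {D : ℕ}

abbrev UG (D : ℕ) := Matrix.unitaryGroup (Fin D) ℂ

/-- component of U ψ -/
noncomputable def xc (ψ : Fin D → ℂ) (i : Fin D) (U : UG D) : ℂ :=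
  ((U : Matrix (Fin D) (Fin D) ℂ).mulVec ψ) i

noncomputable def nsq (ψ : Fin D → ℂ) (i : Fin D) (U : UG D) : ℝ :=
  Complex.normSq (xc ψ i U)

lemma meas_entry (i j : Fin D) : Measurable fun U : UG D =>
    (U : Matrix (Fin D) (Fin D) ℂ) i j := by
  have h1 : Measurable fun M : Matrix (Fin D) (Fin D) ℂ => M i j :=
    (measurable_pi_apply j).comp (measurable_pi_apply i)
  exact h1.comp measurable_subtype_coe

lemma meas_x (ψ : Fin D → ℂ) (i : Fin D) : Measurable (xc ψ i) := by
  have h : xc ψ i = fun U : UG D => ∑ j, (U : Matrix (Fin D) (Fin D) ℂ) i j * ψ j := by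
    funext U
    simp [xc, Matrix.mulVec, dotProduct]
  rw [h]
  exact Finset.measurable_sum _ (fun j _ => (meas_entry i j).mul_const _)

lemma meas_nsq (ψ : Fin D → ℂ) (i : Fin D) : Measurable (nsq ψ i) :=
  Complex.continuous_normSq.measurable.comp (meas_x ψ i)

lemma meas_mul (W : UG D) : Measurable fun V : UG D => W * V := by
  have h : Measurable fun V : UG D =>
      ((W : Matrix (Fin D) (Fin D) ℂ) * (V : Matrix (Fin D) (Fin D) ℂ)) := by
    apply measurable_pi_lambda
    intro i
    apply measurable_pi_lambda
    intro j
    simp only [Matrix.mul_apply]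
    exact Finset.measurable_sum _ (fun k _ => (meas_entry k j).const_mul _)
  exact Measurable.subtype_mk h

lemma norm_pres (U : UG D) (ψ : Fin D → ℂ) :
    ∑ i, nsq ψ i U = ∑ i, Complex.normSq (ψ i) := by
  have h := Matrix.mem_unitaryGroup_iff'.mp U.2
  have key : star ((U : Matrix (Fin D) (Fin D) ℂ).mulVec ψ) ⬝ᵥ
      ((U : Matrix (Fin D) (Fin D) ℂ).mulVec ψ) = star ψ ⬝ᵥ ψ := by
    rw [Matrix.star_mulVec, Matrix.dotProduct_mulVec, Matrix.vecMul_vecMul,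
      ← Matrix.star_eq_conjTranspose, h, Matrix.vecMul_one]
  have h2 : ((∑ i, nsq ψ i U : ℝ) : ℂ) = ((∑ i, Complex.normSq (ψ i) : ℝ) : ℂ) := by
    push_cast
    simpa [dotProduct, Complex.normSq_eq_conj_mul_self, Pi.star_apply, nsq, xc]
      using key
  exact_mod_cast h2

lemma nsq_nonneg (ψ : Fin D → ℂ) (i : Fin D) (U : UG D) : 0 ≤ nsq ψ i U :=
  Complex.normSq_nonneg _

lemma nsq_le_one (ψ : Fin D → ℂ) (hψ : (∑ i, Complex.normSq (ψ i)) = 1)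
    (i : Fin D) (U : UG D) : nsq ψ i U ≤ 1 := by
  have h := norm_pres U ψ
  rw [hψ] at h
  calc nsq ψ i U ≤ ∑ j, nsq ψ j U :=
        Finset.single_le_sum (fun j _ => nsq_nonneg ψ j U) (Finset.mem_univ i)
    _ = 1 := h

lemma integrable_of_bound {X : Type*} [MeasurableSpace X] (μ : Measure X)
    [IsProbabilityMeasure μ] {E : Type*} [NormedAddCommGroup E] (f : X → E)
    (hf : AEStronglyMeasurable f μ) (C : ℝ) (h : ∀ a, ‖f a‖ ≤ C) : Integrable f μ :=
  (integrable_const C).mono' hf (Filter.Eventually.of_forall h)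

lemma invar (μ : Measure (UG D)) [IsProbabilityMeasure μ]
    (hinv : ∀ U : UG D, Measure.map (fun V : UG D => U * V) μ = μ)
    {E : Type*} [NormedAddCommGroup E] [NormedSpace ℝ E]
    (g : UG D → E) (hg : AEStronglyMeasurable g μ) (W : UG D) :
    ∫ V, g (W * V) ∂μ = ∫ V, g V ∂μ := by
  have h1 : AEStronglyMeasurable g (Measure.map (fun V : UG D => W * V) μ) := by
    rwa [hinv W]
  rw [← integral_map (meas_mul W).aemeasurable h1, hinv W]


-- ### phase matrix
lemma phase_mem (i0 : Fin D) :
    Matrix.diagonal (fun j => if j = i0 then (Complex.I) else 1) ∈ Matrix.unitaryGroup (Fin D) ℂ := by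
  rw [Matrix.mem_unitaryGroup_iff, Matrix.star_eq_conjTranspose, Matrix.diagonal_conjTranspose,
    Matrix.diagonal_mul_diagonal]
  ext i j
  rcases eq_or_ne i j with rfl | h
  · rcases eq_or_ne i i0 with rfl | h2
    · simp [Matrix.diagonal_apply_eq, Complex.mul_conj, Complex.normSq_I]
    · simp [Matrix.diagonal_apply_eq, h2]
  · simp [Matrix.diagonal_apply_ne _ h, Matrix.one_apply, h]

-- ### permutation matrix
noncomputable def permU (σ : Equiv.Perm (Fin D)) : Matrix (Fin D) (Fin D) ℂ :=
  Matrix.of fun i j => if σ j = i then 1 else 0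

lemma permU_mem (σ : Equiv.Perm (Fin D)) : permU σ ∈ Matrix.unitaryGroup (Fin D) ℂ := by
  rw [Matrix.mem_unitaryGroup_iff]
  ext i k
  simp only [Matrix.mul_apply, Matrix.star_apply, permU, Matrix.of_apply,
    apply_ite (star : ℂ → ℂ), star_one, star_zero, Matrix.one_apply]
  rw [Finset.sum_eq_single (σ.symm i)]
  · by_cases h : i = k <;> simp [h, Equiv.apply_eq_iff_eq_symm_apply, eq_comm]
  · intro b _ hb
    have : ¬ σ b = i := fun h => hb (by simp [← h])
    simp [this]
  · simp

lemma permU_mulVec (σ : Equiv.Perm (Fin D)) (v : Fin D → ℂ) (i : Fin D) :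
    (permU σ).mulVec v i = v (σ.symm i) := by
  simp only [Matrix.mulVec, dotProduct, permU, Matrix.of_apply]
  rw [Finset.sum_eq_single (σ.symm i)]
  · simp
  · intro b _ hb
    have : ¬ σ b = i := fun h => hb (by simp [← h])
    simp [this]
  · simp

-- ### vecMulVec lemmas
lemma vecMulVec_mul_vecMulVec (a b c d : Fin D → ℂ) :
    Matrix.vecMulVec a b * Matrix.vecMulVec c d = (b ⬝ᵥ c) • Matrix.vecMulVec a d := by
  ext i j
  simp only [Matrix.mul_apply, Matrix.vecMulVec_apply, Matrix.smul_apply, dotProduct,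
    smul_eq_mul, Finset.sum_mul, Finset.mul_sum]
  apply Finset.sum_congr rfl
  intro k _
  ring

lemma vecMulVec_mulVec (a b v : Fin D → ℂ) :
    (Matrix.vecMulVec a b).mulVec v = (b ⬝ᵥ v) • a := by
  ext i
  simp only [Matrix.mulVec, dotProduct, Matrix.vecMulVec_apply, Pi.smul_apply,
    smul_eq_mul, Finset.mul_sum, Finset.sum_mul]
  apply Finset.sum_congr rfl
  intro k _
  ring

lemma vecMulVec_conjTranspose (a b : Fin D → ℂ) :
    (Matrix.vecMulVec a b)ᴴ = Matrix.vecMulVec (star b) (star a) := by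
  ext i j
  simp only [Matrix.conjTranspose_apply, Matrix.vecMulVec_apply, Pi.star_apply, star_mul']
  ring

-- ### behaviour of xc under left multiplication
lemma xc_mul (ψ : Fin D → ℂ) (i : Fin D) (W V : UG D) :
    xc ψ i (W * V) = ((W : Matrix (Fin D) (Fin D) ℂ).mulVec
      ((V : Matrix (Fin D) (Fin D) ℂ).mulVec ψ)) i := by
  have h : ((W * V : UG D) : Matrix (Fin D) (Fin D) ℂ)
      = (W : Matrix (Fin D) (Fin D) ℂ) * (V : Matrix (Fin D) (Fin D) ℂ) := rfl
  simp [xc, h, Matrix.mulVec_mulVec]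

-- ### moment permutation invariance
lemma moment_perm (μ : Measure (UG D)) [IsProbabilityMeasure μ]
    (hinv : ∀ U : UG D, Measure.map (fun V : UG D => U * V) μ = μ)
    (ψ : Fin D → ℂ)
    (σ : Equiv.Perm (Fin D)) (i j : Fin D) :
    ∫ U, nsq ψ (σ.symm i) U * nsq ψ (σ.symm j) U ∂μ = ∫ U, nsq ψ i U * nsq ψ j U ∂μ := by
  have hg : AEStronglyMeasurable (fun U => nsq ψ i U * nsq ψ j U) μ :=
    ((meas_nsq ψ i).mul (meas_nsq ψ j)).aestronglyMeasurable
  have key := invar μ hinv _ hg ⟨permU σ, permU_mem σ⟩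
  rw [← key]
  apply integral_congr_ae
  filter_upwards with V
  have hx : ∀ k : Fin D, xc ψ k ((⟨permU σ, permU_mem σ⟩ : UG D) * V) = xc ψ (σ.symm k) V := by
    intro k
    rw [xc_mul]
    exact permU_mulVec σ _ k
  simp only [nsq, hx]


-- ### vanishing of the complex cross moment
lemma Zsq_zero (μ : Measure (UG D)) [IsProbabilityMeasure μ]
    (hinv : ∀ U : UG D, Measure.map (fun V : UG D => U * V) μ = μ)
    (ψ : Fin D → ℂ) (i0 i1 : Fin D) (h01 : i1 ≠ i0) :
    ∫ U, (xc ψ i0 U * (starRingEnd ℂ) (xc ψ i1 U))^2 ∂μ = 0 := by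
  classical
  set g : UG D → ℂ := fun U => (xc ψ i0 U * (starRingEnd ℂ) (xc ψ i1 U))^2 with hg
  have hmeas : AEStronglyMeasurable g μ := by
    apply Measurable.aestronglyMeasurable
    exact ((meas_x ψ i0).mul (continuous_star.measurable.comp (meas_x ψ i1))).pow_const 2
  set W : UG D := ⟨_, phase_mem i0⟩ with hW
  have key := invar μ hinv g hmeas W
  have hcomp : ∀ V : UG D, g (W * V) = - g V := by
    intro V
    have hx0 : xc ψ i0 (W * V) = Complex.I * xc ψ i0 V := by
      rw [xc_mul]
      show (Matrix.diagonal _).mulVec _ i0 = _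
      rw [Matrix.mulVec_diagonal]
      simp [xc]
    have hx1 : xc ψ i1 (W * V) = xc ψ i1 V := by
      rw [xc_mul]
      show (Matrix.diagonal _).mulVec _ i1 = _
      rw [Matrix.mulVec_diagonal]
      simp [xc, h01]
    simp only [hg, hx0, hx1]
    rw [mul_pow, mul_pow, Complex.I_sq]
    ring
  have h2 : ∫ V, g (W * V) ∂μ = - ∫ V, g V ∂μ := by
    rw [show (fun V => g (W * V)) = fun V => - g V from funext hcomp]
    exact integral_neg g
  rw [h2] at key
  have h3 : (2 : ℂ) * ∫ V, g V ∂μ = 0 := by linear_combination -key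
  exact (mul_eq_zero.mp h3).resolve_left two_ne_zero


-- ### rotation identity: α = 2 β
set_option maxHeartbeats 2000000 in
lemma alpha_beta (μ : Measure (UG D)) [IsProbabilityMeasure μ]
    (hinv : ∀ U : UG D, Measure.map (fun V : UG D => U * V) μ = μ)
    (ψ : Fin D → ℂ) (hψ : (∑ i, Complex.normSq (ψ i)) = 1)
    (i0 i1 : Fin D) (h01 : i0 ≠ i1) :
    ∫ U, (nsq ψ i0 U)^2 ∂μ = 2 * ∫ U, nsq ψ i0 U * nsq ψ i1 U ∂μ := by
  classical
  -- the real constants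
  set c : ℝ := Real.sqrt (1/2) with hcdef
  have hc0 : 0 ≤ c := Real.sqrt_nonneg _
  have hcsq : c^2 = 1/2 := Real.sq_sqrt (by norm_num)
  have hc1 : c ≤ 1 := by nlinarith
  set u0 : ℝ := Real.sqrt ((1-c)/2) with hu0def
  set u1 : ℝ := Real.sqrt ((1+c)/2) with hu1def
  have hu00 : 0 ≤ u0 := Real.sqrt_nonneg _
  have hu10 : 0 ≤ u1 := Real.sqrt_nonneg _
  have hu0sq : u0^2 = (1-c)/2 := Real.sq_sqrt (by linarith)
  have hu1sq : u1^2 = (1+c)/2 := Real.sq_sqrt (by linarith)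
  have hmul : u0 * u1 = c/2 := by
    have h1 : (u0*u1)^2 = (c/2)^2 := by nlinarith
    calc u0 * u1 = Real.sqrt ((u0*u1)^2) := (Real.sqrt_sq (by positivity)).symm
      _ = Real.sqrt ((c/2)^2) := by rw [h1]
      _ = c/2 := Real.sqrt_sq (by positivity)
  -- the rotation matrix
  set u : Fin D → ℂ := fun j => if j = i0 then (u0:ℂ) else if j = i1 then (u1:ℂ) else 0 with hu
  have hstaru : star u = u := by
    funext j
    by_cases h : j = i0 <;> by_cases h2 : j = i1 <;>
      simp [hu, h, h2, h01.symm, Complex.conj_ofReal]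
  have hdot : ∀ v : Fin D → ℂ, u ⬝ᵥ v = (u0:ℂ) * v i0 + (u1:ℂ) * v i1 := by
    intro v
    have hz : ∀ j ∈ Finset.univ, j ∉ ({i0, i1} : Finset (Fin D)) → u j * v j = 0 := by
      intro j _ hj
      simp only [Finset.mem_insert, Finset.mem_singleton, not_or] at hj
      simp [hu, hj.1, hj.2]
    calc u ⬝ᵥ v = ∑ j ∈ ({i0, i1} : Finset (Fin D)), u j * v j :=
          (Finset.sum_subset (Finset.subset_univ _) hz).symm
      _ = u i0 * v i0 + u i1 * v i1 := Finset.sum_pair h01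
      _ = (u0:ℂ) * v i0 + (u1:ℂ) * v i1 := by
          simp [hu, h01.symm]
  have hdotu : u ⬝ᵥ u = 1 := by
    rw [hdot]
    have h1 : u i0 = (u0:ℂ) := by simp [hu]
    have h2 : u i1 = (u1:ℂ) := by simp [hu, h01.symm]
    rw [h1, h2]
    have : u0*u0 + u1*u1 = 1 := by nlinarith
    push_cast
    exact_mod_cast congrArg (fun r : ℝ => (r:ℂ)) this
  set M : Matrix (Fin D) (Fin D) ℂ := Matrix.vecMulVec u u with hM
  set R : Matrix (Fin D) (Fin D) ℂ := 1 - (2:ℂ) • M with hR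
  have hRmem : R ∈ Matrix.unitaryGroup (Fin D) ℂ := by
    rw [Matrix.mem_unitaryGroup_iff]
    have hstarR : star R = R := by
      have hMstar : star M = M := by
        rw [hM, Matrix.star_eq_conjTranspose, vecMulVec_conjTranspose, hstaru]
      rw [hR, star_sub, star_one, star_smul, hMstar]
      norm_num
    have hMM : M * M = M := by
      rw [hM, vecMulVec_mul_vecMulVec, hdotu, one_smul]
    calc R * star R = R * R := by rw [hstarR]
      _ = 1 - (2:ℂ) • M - ((2:ℂ) • M - (2:ℂ) • ((2:ℂ) • (M * M))) := by
          rw [hR]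
          rw [sub_mul, one_mul, mul_sub, mul_one, Matrix.smul_mul, Matrix.mul_smul]
      _ = 1 := by rw [hMM]; module
  set W : UG D := ⟨R, hRmem⟩ with hW
  -- action of R on vectors
  have hc1' : ((2*u0*u0 : ℝ) : ℂ) = 1 - (c:ℝ) := by
    have : 2*u0*u0 = 1 - c := by nlinarith
    exact_mod_cast congrArg (fun r : ℝ => (r:ℂ)) this
  have hc2' : ((2*u0*u1 : ℝ) : ℂ) = (c:ℝ) := by
    have : 2*u0*u1 = c := by nlinarith
    exact_mod_cast congrArg (fun r : ℝ => (r:ℂ)) this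
  have hc3' : ((2*u1*u1 : ℝ) : ℂ) = 1 + (c:ℝ) := by
    have : 2*u1*u1 = 1 + c := by nlinarith
    exact_mod_cast congrArg (fun r : ℝ => (r:ℂ)) this
  have hRv : ∀ v : Fin D → ℂ, R.mulVec v = v - (2:ℂ) • ((u ⬝ᵥ v) • u) := by
    intro v
    rw [hR, Matrix.sub_mulVec, Matrix.one_mulVec, Matrix.smul_mulVec, hM]
    conv_lhs => rw [show Matrix.vecMulVec u u = Matrix.vecMulVec u (star u) by rw [hstaru]]
    rw [vecMulVec_mulVec, hstaru]
  have hRv0 : ∀ v : Fin D → ℂ, R.mulVec v i0 = (c:ℂ) * (v i0 - v i1) := by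
    intro v
    rw [hRv]
    have h1 : u i0 = (u0:ℂ) := by simp [hu]
    simp only [Pi.sub_apply, Pi.smul_apply, smul_eq_mul, hdot, h1]
    push_cast at hc1' hc2' ⊢
    linear_combination (-(v i0)) * hc1' + (-(v i1)) * hc2'
  have hRv1 : ∀ v : Fin D → ℂ, R.mulVec v i1 = -(c:ℂ) * (v i0 + v i1) := by
    intro v
    rw [hRv]
    have h2 : u i1 = (u1:ℂ) := by simp [hu, h01.symm]
    simp only [Pi.sub_apply, Pi.smul_apply, smul_eq_mul, hdot, h2]
    push_cast at hc2' hc3' ⊢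
    linear_combination (-(v i0)) * hc2' + (-(v i1)) * hc3'
  -- pointwise identity
  have hpoint : ∀ V : UG D, (nsq ψ i0 (W*V))^2 + (nsq ψ i1 (W*V))^2
      = (nsq ψ i0 V + nsq ψ i1 V)^2/2 + nsq ψ i0 V * nsq ψ i1 V
        + ((xc ψ i0 V * (starRingEnd ℂ) (xc ψ i1 V))^2).re := by
    intro V
    have e0 : xc ψ i0 (W*V) = (c:ℂ) * (xc ψ i0 V - xc ψ i1 V) := by
      rw [xc_mul]
      show R.mulVec _ i0 = _
      rw [hRv0]
      rfl
    have e1 : xc ψ i1 (W*V) = -(c:ℂ) * (xc ψ i0 V + xc ψ i1 V) := by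
      rw [xc_mul]
      show R.mulVec _ i1 = _
      rw [hRv1]
      rfl
    have hcc : c * c = 1/2 := by nlinarith
    have hn0 : nsq ψ i0 (W*V) = (1/2) * Complex.normSq (xc ψ i0 V - xc ψ i1 V) := by
      rw [nsq, e0, Complex.normSq_mul, Complex.normSq_ofReal, hcc]
    have hn1 : nsq ψ i1 (W*V) = (1/2) * Complex.normSq (xc ψ i0 V + xc ψ i1 V) := by
      rw [nsq, e1, neg_mul, Complex.normSq_neg, Complex.normSq_mul, Complex.normSq_ofReal, hcc]
    set x := xc ψ i0 V
    set y := xc ψ i1 V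
    have hsub : Complex.normSq (x - y)
        = Complex.normSq x + Complex.normSq y - 2*(x * (starRingEnd ℂ) y).re :=
      Complex.normSq_sub x y
    have hadd : Complex.normSq (x + y)
        = Complex.normSq x + Complex.normSq y + 2*(x * (starRingEnd ℂ) y).re :=
      Complex.normSq_add x y
    have hre : ((x * (starRingEnd ℂ) y)^2).re
        = (x * (starRingEnd ℂ) y).re^2 - (x * (starRingEnd ℂ) y).im^2 := by
      rw [sq, Complex.mul_re]
      ring
    have hnn : Complex.normSq x * Complex.normSq y
        = (x * (starRingEnd ℂ) y).re^2 + (x * (starRingEnd ℂ) y).im^2 := by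
      rw [← Complex.normSq_conj y, ← Complex.normSq_mul, Complex.normSq_apply]
      ring
    have hnsq0 : nsq ψ i0 V = Complex.normSq x := rfl
    have hnsq1 : nsq ψ i1 V = Complex.normSq y := rfl
    rw [hn0, hn1, hsub, hadd, hre, hnsq0, hnsq1]
    linear_combination (-1:ℝ) * hnn

  -- integrability facts
  have hIntPair : ∀ i j : Fin D, Integrable (fun U => nsq ψ i U * nsq ψ j U) μ := by
    intro i j
    apply integrable_of_bound μ _ ((meas_nsq ψ i).mul (meas_nsq ψ j)).aestronglyMeasurable 1
    intro U
    rw [Real.norm_eq_abs, Pi.mul_apply, abs_of_nonneg (mul_nonneg (nsq_nonneg ψ i U) (nsq_nonneg ψ j U))]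
    nlinarith [nsq_le_one ψ hψ i U, nsq_le_one ψ hψ j U, nsq_nonneg ψ i U, nsq_nonneg ψ j U]
  have hIntPow : ∀ i : Fin D, Integrable (fun U => (nsq ψ i U)^2) μ := by
    intro i
    have := hIntPair i i
    simpa [pow_two] using this
  have hIntSq : Integrable (fun U => (nsq ψ i0 U + nsq ψ i1 U)^2/2) μ := by
    apply integrable_of_bound μ _ ?_ 2
    · intro U
      rw [Real.norm_eq_abs, abs_of_nonneg (by positivity)]
      nlinarith [nsq_le_one ψ hψ i0 U, nsq_le_one ψ hψ i1 U, nsq_nonneg ψ i0 U,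
        nsq_nonneg ψ i1 U]
    · exact ((((meas_nsq ψ i0).add (meas_nsq ψ i1)).pow_const 2).div_const 2).aestronglyMeasurable
  have hIntZ : Integrable (fun U => (xc ψ i0 U * (starRingEnd ℂ) (xc ψ i1 U))^2) μ := by
    apply integrable_of_bound μ _ ?_ 1
    · intro U
      have h1 : ‖(xc ψ i0 U * (starRingEnd ℂ) (xc ψ i1 U))^2‖
          = Complex.normSq (xc ψ i0 U) * Complex.normSq (xc ψ i1 U) := by
        rw [norm_pow, norm_mul, mul_pow,
          Complex.sq_norm, Complex.sq_norm, Complex.normSq_conj]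
      have e0 : Complex.normSq (xc ψ i0 U) = nsq ψ i0 U := rfl
      have e1 : Complex.normSq (xc ψ i1 U) = nsq ψ i1 U := rfl
      rw [h1, e0, e1]
      nlinarith [nsq_le_one ψ hψ i0 U, nsq_le_one ψ hψ i1 U, nsq_nonneg ψ i0 U,
        nsq_nonneg ψ i1 U]
    · exact (((meas_x ψ i0).mul
        (continuous_star.measurable.comp (meas_x ψ i1))).pow_const 2).aestronglyMeasurable
  have hIntRe : Integrable (fun U => ((xc ψ i0 U * (starRingEnd ℂ) (xc ψ i1 U))^2).re) μ := by
    have := hIntZ.re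
    simpa using this
  -- invariance
  have hgmeas : AEStronglyMeasurable (fun U => (nsq ψ i0 U)^2 + (nsq ψ i1 U)^2) μ :=
    (((meas_nsq ψ i0).pow_const 2).add ((meas_nsq ψ i1).pow_const 2)).aestronglyMeasurable
  have hkey := invar μ hinv _ hgmeas W
  -- evaluate the left hand side pointwise
  have hLHS : ∫ V, ((nsq ψ i0 (W*V))^2 + (nsq ψ i1 (W*V))^2) ∂μ
      = ∫ V, ((nsq ψ i0 V + nsq ψ i1 V)^2/2 + nsq ψ i0 V * nsq ψ i1 V
        + ((xc ψ i0 V * (starRingEnd ℂ) (xc ψ i1 V))^2).re) ∂μ := by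
    apply integral_congr_ae
    filter_upwards with V
    exact hpoint V
  -- split the integral
  have hsplit : ∫ V, ((nsq ψ i0 V + nsq ψ i1 V)^2/2 + nsq ψ i0 V * nsq ψ i1 V
        + ((xc ψ i0 V * (starRingEnd ℂ) (xc ψ i1 V))^2).re) ∂μ
      = (∫ V, (nsq ψ i0 V + nsq ψ i1 V)^2/2 ∂μ) + (∫ V, nsq ψ i0 V * nsq ψ i1 V ∂μ)
        + (∫ V, ((xc ψ i0 V * (starRingEnd ℂ) (xc ψ i1 V))^2).re ∂μ) := by
    have hAB : Integrable (fun V => (nsq ψ i0 V + nsq ψ i1 V)^2/2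
        + nsq ψ i0 V * nsq ψ i1 V) μ := hIntSq.add (hIntPair i0 i1)
    rw [integral_add hAB hIntRe, integral_add hIntSq (hIntPair i0 i1)]
  -- compute the three pieces
  have h11 : ∫ U, (nsq ψ i1 U)^2 ∂μ = ∫ U, (nsq ψ i0 U)^2 ∂μ := by
    have := moment_perm μ hinv ψ (Equiv.swap i0 i1) i0 i0
    simp only [Equiv.symm_swap, Equiv.swap_apply_left] at this
    simpa [pow_two] using this
  have hsq : ∫ V, (nsq ψ i0 V + nsq ψ i1 V)^2/2 ∂μ
      = (∫ U, (nsq ψ i0 U)^2 ∂μ) + (∫ U, nsq ψ i0 U * nsq ψ i1 U ∂μ) := by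
    have hptw : ∀ V : UG D, (nsq ψ i0 V + nsq ψ i1 V)^2/2
        = ((nsq ψ i0 V)^2)/2 + ((nsq ψ i1 V)^2)/2 + nsq ψ i0 V * nsq ψ i1 V := by
      intro V; ring
    rw [integral_congr_ae (Filter.Eventually.of_forall hptw)]
    have hCD : Integrable (fun V => (nsq ψ i0 V)^2/2 + (nsq ψ i1 V)^2/2) μ :=
      ((hIntPow i0).div_const 2).add ((hIntPow i1).div_const 2)
    rw [integral_add hCD (hIntPair i0 i1),
      integral_add ((hIntPow i0).div_const 2) ((hIntPow i1).div_const 2),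
      integral_div, integral_div, h11]
    ring
  have hzero : ∫ V, ((xc ψ i0 V * (starRingEnd ℂ) (xc ψ i1 V))^2).re ∂μ = 0 := by
    have h2 := Zsq_zero μ hinv ψ i0 i1 (Ne.symm h01)
    calc ∫ V, ((xc ψ i0 V * (starRingEnd ℂ) (xc ψ i1 V))^2).re ∂μ
        = (∫ V, (xc ψ i0 V * (starRingEnd ℂ) (xc ψ i1 V))^2 ∂μ).re := by
          simpa [RCLike.re_eq_complex_re] using integral_re hIntZ
      _ = 0 := by rw [h2]; simp
  -- put everything together
  have hfin : 2 * ∫ U, (nsq ψ i0 U)^2 ∂μ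
      = (∫ U, (nsq ψ i0 U)^2 ∂μ) + 2 * (∫ U, nsq ψ i0 U * nsq ψ i1 U ∂μ) := by
    have hL : ∫ V, ((nsq ψ i0 (W*V))^2 + (nsq ψ i1 (W*V))^2) ∂μ
        = 2 * ∫ U, (nsq ψ i0 U)^2 ∂μ := by
      rw [hkey, integral_add (hIntPow i0) (hIntPow i1), h11]
      ring
    rw [hLHS, hsplit, hzero] at hL
    rw [hsq] at hL
    linarith
  linarith

lemma integrable_pair (μ : Measure (UG D)) [IsProbabilityMeasure μ]
    (ψ : Fin D → ℂ) (hψ : (∑ i, Complex.normSq (ψ i)) = 1) (i j : Fin D) :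
    Integrable (fun U => nsq ψ i U * nsq ψ j U) μ := by
  apply integrable_of_bound μ _ ((meas_nsq ψ i).mul (meas_nsq ψ j)).aestronglyMeasurable 1
  intro U
  rw [Real.norm_eq_abs, Pi.mul_apply, abs_of_nonneg (mul_nonneg (nsq_nonneg ψ i U) (nsq_nonneg ψ j U))]
  nlinarith [nsq_le_one ψ hψ i U, nsq_le_one ψ hψ j U, nsq_nonneg ψ i U, nsq_nonneg ψ j U]

lemma integrable_pow (μ : Measure (UG D)) [IsProbabilityMeasure μ]
    (ψ : Fin D → ℂ) (hψ : (∑ i, Complex.normSq (ψ i)) = 1) (i : Fin D) :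
    Integrable (fun U => (nsq ψ i U)^2) μ := by
  have := integrable_pair μ ψ hψ i i
  simpa [pow_two] using this

lemma moment_diag (μ : Measure (UG D)) [IsProbabilityMeasure μ]
    (hinv : ∀ U : UG D, Measure.map (fun V : UG D => U * V) μ = μ)
    (ψ : Fin D → ℂ) (i0 i : Fin D) :
    ∫ U, (nsq ψ i U)^2 ∂μ = ∫ U, (nsq ψ i0 U)^2 ∂μ := by
  have h := moment_perm μ hinv ψ (Equiv.swap i0 i) i0 i0
  simp only [Equiv.symm_swap, Equiv.swap_apply_left] at h
  simpa [pow_two] using h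

lemma moment_off (μ : Measure (UG D)) [IsProbabilityMeasure μ]
    (hinv : ∀ U : UG D, Measure.map (fun V : UG D => U * V) μ = μ)
    (ψ : Fin D → ℂ) (i0 i1 i j : Fin D) (h01 : i0 ≠ i1) (hij : i ≠ j) :
    ∫ U, nsq ψ i U * nsq ψ j U ∂μ = ∫ U, nsq ψ i0 U * nsq ψ i1 U ∂μ := by
  classical
  have hwne : Equiv.swap i0 i j ≠ i0 := by
    intro h
    have h2 : Equiv.swap i0 i (Equiv.swap i0 i j) = Equiv.swap i0 i i0 := by rw [h]
    rw [Equiv.swap_apply_self, Equiv.swap_apply_left] at h2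
    exact hij h2.symm
  set e : Equiv.Perm (Fin D) := (Equiv.swap i1 (Equiv.swap i0 i j)).trans (Equiv.swap i0 i)
    with he
  have he0 : e i0 = i := by
    have hx : Equiv.swap i1 (Equiv.swap i0 i j) i0 = i0 :=
      Equiv.swap_apply_of_ne_of_ne h01 (Ne.symm hwne)
    simp [he, Equiv.trans_apply, hx, Equiv.swap_apply_left]
  have he1 : e i1 = j := by
    have hx : Equiv.swap i1 (Equiv.swap i0 i j) i1 = Equiv.swap i0 i j :=
      Equiv.swap_apply_left _ _
    simp [he, Equiv.trans_apply, hx, Equiv.swap_apply_self]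
  have h := moment_perm μ hinv ψ e.symm i0 i1
  rw [Equiv.symm_symm, he0, he1] at h
  exact h

end HaarPurity

open HaarPurity

/-- Haar average of the purity of the diagonal ensemble: for the Haar (i.e. the
left-translation-invariant) probability measure `μ` on the unitary group `U(D)` and a
unit vector `ψ ∈ ℂ^D`, `∫ ∑ᵢ |(Uψ)ᵢ|⁴ dμ(U) = 2/(D+1)`. -/
theorem haar_average_purity
    (D : ℕ) (hD : 1 ≤ D)
    (μ : Measure (Matrix.unitaryGroup (Fin D) ℂ)) [IsProbabilityMeasure μ]
    (hinv : ∀ U : Matrix.unitaryGroup (Fin D) ℂ,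
      Measure.map (fun V : Matrix.unitaryGroup (Fin D) ℂ => U * V) μ = μ)
    (ψ : Fin D → ℂ) (hψ : (∑ i, Complex.normSq (ψ i)) = 1) :
    (∫ U : Matrix.unitaryGroup (Fin D) ℂ,
        ∑ i, (Complex.normSq (((U : Matrix (Fin D) (Fin D) ℂ).mulVec ψ) i)) ^ 2 ∂μ) =
      2 / (D + 1) := by
  classical
  show (∫ U : UG D, ∑ i, (nsq ψ i U)^2 ∂μ) = 2 / (D + 1)
  rcases Nat.lt_or_ge D 2 with h2 | h2
  · -- D = 1
    have hD1 : D = 1 := by omega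
    subst hD1
    have hval : ∀ U : UG 1, ∑ i, (nsq ψ i U)^2 = 1 := by
      intro U
      have h := norm_pres U ψ
      rw [hψ] at h
      rw [Fin.sum_univ_one] at h ⊢
      rw [h, one_pow]
    rw [integral_congr_ae (Filter.Eventually.of_forall hval)]
    simp
    norm_num
  · -- D ≥ 2
    have h0 : 0 < D := by omega
    have h1 : 1 < D := by omega
    set i0 : Fin D := ⟨0, h0⟩ with hi0
    set i1 : Fin D := ⟨1, h1⟩ with hi1
    have h01 : i0 ≠ i1 := by
      intro h
      have := congrArg Fin.val h
      simp [hi0, hi1] at this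
    set α : ℝ := ∫ U, (nsq ψ i0 U)^2 ∂μ with hα
    set β : ℝ := ∫ U, nsq ψ i0 U * nsq ψ i1 U ∂μ with hβ
    have hab : α = 2 * β := alpha_beta μ hinv ψ hψ i0 i1 h01
    -- the goal integral equals D * α
    have hswap : (∫ U : UG D, ∑ i, (nsq ψ i U)^2 ∂μ) = ∑ i : Fin D, ∫ U, (nsq ψ i U)^2 ∂μ :=
      integral_finset_sum _ (fun i _ => integrable_pow μ ψ hψ i)
    have hdiag : ∀ i : Fin D, ∫ U, (nsq ψ i U)^2 ∂μ = α := fun i => moment_diag μ hinv ψ i0 i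
    have hgoal : (∫ U : UG D, ∑ i, (nsq ψ i U)^2 ∂μ) = (D:ℝ) * α := by
      rw [hswap, Finset.sum_congr rfl (fun i _ => hdiag i), Finset.sum_const,
        Finset.card_univ, Fintype.card_fin, nsmul_eq_mul]
    -- the normalization identity
    have hnorm : (D:ℝ) * α + ((D:ℝ)*(D:ℝ) - (D:ℝ)) * β = 1 := by
      have hone : (∫ U : UG D, (∑ i, nsq ψ i U) * (∑ j, nsq ψ j U) ∂μ) = 1 := by
        have hval : ∀ U : UG D, (∑ i, nsq ψ i U) * (∑ j, nsq ψ j U) = 1 := by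
          intro U
          have h := norm_pres U ψ
          rw [hψ] at h
          rw [h, one_mul]
        rw [integral_congr_ae (Filter.Eventually.of_forall hval)]
        simp
      have hexp : (∫ U : UG D, (∑ i, nsq ψ i U) * (∑ j, nsq ψ j U) ∂μ)
          = ∑ i : Fin D, ∑ j : Fin D, ∫ U, nsq ψ i U * nsq ψ j U ∂μ := by
        have hptw : ∀ U : UG D, (∑ i, nsq ψ i U) * (∑ j, nsq ψ j U)
            = ∑ i : Fin D, ∑ j : Fin D, nsq ψ i U * nsq ψ j U := by
          intro U
          rw [Finset.sum_mul_sum]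
        rw [integral_congr_ae (Filter.Eventually.of_forall hptw)]
        rw [integral_finset_sum _ (fun i _ =>
          integrable_finset_sum _ (fun j _ => integrable_pair μ ψ hψ i j))]
        exact Finset.sum_congr rfl (fun i _ =>
          integral_finset_sum _ (fun j _ => integrable_pair μ ψ hψ i j))
      have hentry : ∀ i j : Fin D, (∫ U, nsq ψ i U * nsq ψ j U ∂μ)
          = if j = i then α else β := by
        intro i j
        by_cases h : j = i
        · subst h
          rw [if_pos rfl]
          have := moment_diag μ hinv ψ i0 j
          rw [hα]
          rw [← this]
          simp [pow_two]
        · rw [if_neg h]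
          exact moment_off μ hinv ψ i0 i1 i j h01 (Ne.symm h)
      have hrow : ∀ i : Fin D, (∑ j : Fin D, ∫ U, nsq ψ i U * nsq ψ j U ∂μ)
          = (D:ℝ) * β + (α - β) := by
        intro i
        rw [Finset.sum_congr rfl (fun j _ => hentry i j)]
        have : ∀ j : Fin D, (if j = i then α else β) = β + (if j = i then α - β else 0) := by
          intro j
          by_cases h : j = i <;> simp [h]
        rw [Finset.sum_congr rfl (fun j _ => this j), Finset.sum_add_distrib,
          Finset.sum_const, Finset.sum_ite_eq' Finset.univ i (fun _ => α - β),
          if_pos (Finset.mem_univ i), Finset.card_univ, Fintype.card_fin, nsmul_eq_mul]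
      rw [hexp] at hone
      rw [Finset.sum_congr rfl (fun i _ => hrow i), Finset.sum_const, Finset.card_univ,
        Fintype.card_fin, nsmul_eq_mul] at hone
      nlinarith [hone]
    rw [hgoal]
    have hDpos : (0:ℝ) < (D:ℝ) := by exact_mod_cast h0
    rw [eq_div_iff (by positivity : ((D:ℝ)+1) ≠ 0)]
    linear_combination ((D:ℝ)^2 - (D:ℝ)) * hab + 2 * hnorm
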